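/- Let S be a unary semigroup satisfying Σ_ref. Then for every pair of distinct elements a, b ∈ S there exist a unary semigroup T which is either a square band or the adjacency semigroup A(H) of some reflexive graph H, and a surjective unary semigroup homomorphism φ : S → T with φ(a) ≠ φ(b). (Consequently, every unary semigroup satisfying Σ_ref is a subdirect product of adjacency semigroups of reflexive graphs and square bands.) -/

import Mathlib

universe u

/-- Multiplication of the adjacency semigroup `A(G)` of a graph `G = ⟨V; r⟩`:
the carrier is `Option (V × V)` with `none` playing the role of the zero element. -/
noncomputable def adjMul {V : Type*} (r : V → V → Prop) :
    Option (V × V) → Option (V × V) → Option (V × V)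
  | some (x, y), some (z, t) =>
      @ite _ (r y z) (Classical.propDecidable _) (some (x, t)) none
  | _, _ => none

/-- Reversion in the adjacency semigroup: `(x,y)' = (y,x)` and `0' = 0`. -/
def adjStar {V : Type*} : Option (V × V) → Option (V × V)
  | some (x, y) => some (y, x)
  | none => none

/-- Bundled form of the identity system `Σ_ref`. -/
structure SigRef (S : Type u) [Semigroup S] [Star S] : Prop where
  e1 : ∀ x : S, star (star x) = x
  e2 : ∀ x y z : S, x * star (y * z) = star (y * star (x * star z))
  e3 : ∀ x y z : S, star (x * y) * z = star (star (star x * z) * y)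
  e4 : ∀ x : S, x * star x * x = x
  e7 : ∀ x y z : S, x * y * x * z * x = x * z * x * y * x * z * x
  e8 : ∀ x y z : S, x * z * x * y * x * z * x = x * z * x * y * x
  e5 : ∀ x : S, star (x * star x) = x * star x

namespace SigRef

variable {S : Type u} [Semigroup S] [Star S] (hS : SigRef S)
include hS

/-- `x' x x' = x'`. -/
lemma sxs (x : S) : star x * x * star x = star x := by
  have h := hS.e4 (star x); rwa [hS.e1] at h

/-- context version of e4 -/
lemma e4c (x t : S) : x * (star x * (x * t)) = x * t := by
  simpa only [mul_assoc] using congrArg (fun c => c * t) (hS.e4 x)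

lemma sxsc (x t : S) : star x * (x * (star x * t)) = star x * t := by
  simpa only [mul_assoc] using congrArg (fun c => c * t) (hS.sxs x)

lemma rr_idem (x : S) : (x * star x) * (x * star x) = x * star x := by
  simpa only [mul_assoc] using congrArg (fun c => x * c) (hS.sxs x)

lemma ll_idem (x : S) : (star x * x) * (star x * x) = star x * x := by
  simpa only [mul_assoc] using congrArg (fun c => star x * c) (hS.e4 x)

lemma lstar (x : S) : star (star x * x) = star x * x := by
  have h := hS.e5 (star x); rwa [hS.e1] at h

/-- `(xy)' (x x') = (xy)'`. -/
lemma rabsorb (x y : S) : star (x * y) * (x * star x) = star (x * y) := by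
  have h := hS.e3 x y (x * star x)
  rw [show star x * (x * star x) = star x from by
        simpa only [mul_assoc] using hS.sxs x, hS.e1] at h
  exact h

/-- K : `(b y)' = y' (b (y y'))'`. -/
lemma K (b y : S) : star (b * y) = star y * star (b * (y * star y)) := by
  have h := hS.e2 (star y) b (y * star y)
  rw [hS.e5 y] at h
  rw [show star y * (y * star y) = star y from by
        simpa only [mul_assoc] using hS.sxs y] at h
  rw [hS.e1 y] at h
  exact h.symm

/-- for a projection `q`: `(b q)' = q (b q)'`. -/
lemma Kq {q : S} (hq1 : q * q = q) (hq2 : star q = q) (b : S) :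
    star (b * q) = q * star (b * q) := by
  have h := hS.K b q
  rwa [hq2, hq1] at h

/-- K' : `(x b)' x = ((x' x) b)'`. -/
lemma K' (x b : S) : star (x * b) * x = star (star x * x * b) := by
  have h := hS.e3 x b x
  rwa [hS.lstar x] at h

/-- for a projection `q`: `(q b)' q = (q b)'`. -/
lemma Kq' {q : S} (hq1 : q * q = q) (hq2 : star q = q) (b : S) :
    star (q * b) * q = star (q * b) := by
  have h := hS.K' q b
  rwa [hq2, hq1] at h

/-- K3 : `y (x y)' = (x (y y'))'`. -/
lemma K3 (x y : S) : y * star (x * y) = star (x * (y * star y)) := by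
  rw [hS.K x y, ← mul_assoc]
  exact (hS.Kq (hS.rr_idem y) (hS.e5 y) x).symm

/-- Kyy : `y' (y (x y)') = (x y)'`. -/
lemma Kyy (x y : S) : star y * (y * star (x * y)) = star (x * y) := by
  rw [hS.K3 x y]
  exact (hS.K x y).symm

end SigRef

namespace SigRef

variable {S : Type u} [Semigroup S] [Star S] (hS : SigRef S)
include hS

/-- The scheme `(xy) m ((xy)(xy)') = (xy) m (x x')`. -/
lemma A2 (x y m : S) :
    x * y * m * (x * y * star (x * y)) = x * y * m * (x * star x) := by
  have t1 := congrArg (fun c => x * y * m * (x * (y * c))) (hS.rabsorb x y).symm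
  have t2 := congrArg (fun c => c * star x) (hS.e8 x (y * star (x * y)) (y * m)).symm
  have t3 := congrArg (fun c => c * star x) (hS.e7 x (y * star (x * y)) (y * m)).symm
  have t4 := congrArg (fun c => c * (m * (x * star x))) (hS.e4 (x * y))
  simp only [mul_assoc] at t1 t2 t3 t4 ⊢
  rw [t1, t2, t3, t4]

/-- The scheme `(xy) m ((xy)'(xy)) = (xy) m (y' y)`. -/
lemma dia (x y m : S) :
    x * y * m * (star (x * y) * (x * y)) = x * y * m * (star y * y) := by
  have t1 := congrArg (fun c => c * (m * (star (x * y) * (x * y)))) (hS.e4 (x * y)).symm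
  have t2 := congrArg
    (fun c => x * y * star (x * y) * (x * y) * m * (c * (x * y))) (hS.Kyy x y).symm
  have t3 := congrArg (fun c => x * c) (hS.e8 y (m * star y) (star (x * y) * x))
  have t4 := congrArg (fun c => c * (m * (star y * y))) (hS.e4 (x * y))
  simp only [mul_assoc] at t1 t2 t3 t4 ⊢
  rw [t1, t2, t3, t4]

/-- Two projections with `EF = F` and `FE = E` are equal. -/
lemma eqproj {E F : S} (hE1 : E * E = E) (hE2 : star E = E) (hF2 : star F = F)
    (hEF : E * F = F) (hFE : F * E = E) : E = F := by
  have k : star (E * F) * E = star (E * F) := hS.Kq' hE1 hE2 F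
  rw [hEF, hF2] at k
  -- k : F * E = F
  rw [hFE] at k
  exact k

/-- Two projections with `GH = G` and `HG = H` are equal. -/
lemma eqproj2 {G H : S} (hH1 : H * H = H) (hH2 : star H = H) (hG2 : star G = G)
    (hGH : G * H = G) (hHG : H * G = H) : G = H := by
  have k : star (G * H) = H * star (G * H) := hS.Kq hH1 hH2 G
  rw [hGH, hG2] at k
  -- k : G = H * G
  rw [hHG] at k
  exact k

/-- An element is determined by its two canonical projections. -/
lemma Qlemma {a b : S} (he : a * star a = b * star b) (hf : star a * a = star b * b) :
    a = b := by
  set u := star a * b with hu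
  have s1 : u * (star a * a) = u := by
    rw [hf, hu]
    simpa only [mul_assoc] using congrArg (fun c => star a * c) (hS.e4 b)
  have s2 : u * (star b * a) = star a * a := by
    rw [hu]
    calc star a * b * (star b * a) = star a * (b * (star b * a)) := by
          simp only [mul_assoc]
      _ = star a * (a * (star a * a)) := by
          simpa only [mul_assoc] using (congrArg (fun c => star a * (c * a)) he).symm
      _ = star a * a := by
          simpa only [mul_assoc] using congrArg (fun c => star a * c) (hS.e4 a)
  have s3 : star a * a * u = u := by
    rw [hu]
    simpa only [mul_assoc] using congrArg (fun c => c * b) (hS.sxs a)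
  have s3' : star a * (a * u) = u := by
    simpa only [mul_assoc] using s3
  have fuc : ∀ t : S, star a * (a * (u * t)) = u * t := fun t => by
    simpa only [mul_assoc] using congrArg (fun c => c * t) s3
  have s4 : u * u = u := by
    have h7i := hS.e7 (star a * a) (star a * a) u
    simp only [mul_assoc] at h7i
    simp only [s1, s3', fuc] at h7i
    exact h7i.symm
  have s5 : u = star a * a := by
    calc u = u * (star a * a) := s1.symm
      _ = u * (u * (star b * a)) := by rw [s2]
      _ = u * u * (star b * a) := (mul_assoc u u _).symm
      _ = u * (star b * a) := by rw [s4]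
      _ = star a * a := s2
  rw [hu] at s5
  have e1 : a * (star a * b) = a * (star a * a) := by rw [s5]
  have l1 : a * (star a * b) = b := by rw [← mul_assoc, he, hS.e4 b]
  have r1 : a * (star a * a) = a := by rw [← mul_assoc, hS.e4 a]
  rw [l1, r1] at e1
  exact e1.symm

/-- `x = (x x') x (x' x)`. -/
lemma self_sandwich (x : S) : x = x * star x * x * (star x * x) := by
  rw [hS.e4 x, ← mul_assoc, hS.e4 x]

/-- `w (xy(xy)') = w (xx')` for every `w` above `d`, when `xy` is above `d`. -/
lemma reqr {d x y : S} (hxy : ∃ u v : S, d = u * (x * y) * v) :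
    ∀ w : S, (∃ s t : S, w = s * d * t) →
      w * (x * y * star (x * y)) = w * (x * star x) := by
  obtain ⟨u, v, hd⟩ := hxy
  rintro w ⟨s, t, hw⟩
  rw [hw, hd]
  simpa only [mul_assoc] using congrArg (fun c => s * (u * c)) (hS.A2 x y (v * t))

/-- `w ((xy)'(xy)) = w (y'y)` for every `w` above `d`, when `xy` is above `d`. -/
lemma reql {d x y : S} (hxy : ∃ u v : S, d = u * (x * y) * v) :
    ∀ w : S, (∃ s t : S, w = s * d * t) →
      w * (star (x * y) * (x * y)) = w * (star y * y) := by
  obtain ⟨u, v, hd⟩ := hxy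
  rintro w ⟨s, t, hw⟩
  rw [hw, hd]
  simpa only [mul_assoc] using congrArg (fun c => s * (u * c)) (hS.dia x y (v * t))

/-- Separation: if `b` lies in the ideal generated by `a` and the canonical
projections of `a` and `b` are identified by all tests from the ideal of `a`,
then `a = b`. -/
lemma sep {a b : S} (hTb : ∃ s t : S, b = s * a * t)
    (hr : ∀ w : S, (∃ s t : S, w = s * a * t) → w * (a * star a) = w * (b * star b))
    (hl : ∀ w : S, (∃ s t : S, w = s * a * t) → w * (star a * a) = w * (star b * b)) :
    a = b := by
  have Ta : ∃ s t : S, a = s * a * t := ⟨a * star a, star a * a, hS.self_sandwich a⟩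
  have Tsa : ∃ s t : S, star a = s * a * t := ⟨star a, star a, (hS.sxs a).symm⟩
  have Tsb : ∃ s t : S, star b = s * a * t := by
    obtain ⟨s, t, hb⟩ := hTb
    refine ⟨star b * s, t * star b, ?_⟩
    have : star b * s * a * (t * star b) = star b := by
      calc star b * s * a * (t * star b) = star b * (s * a * t) * star b := by
            simp only [mul_assoc]
        _ = star b * b * star b := by rw [← hb]
        _ = star b := hS.sxs b
    exact this.symm
  have f1 : star a * (b * star b) = star a := by
    have h := hr (star a) Tsa
    rw [show star a * (a * star a) = star a from by
          simpa only [mul_assoc] using hS.sxs a] at h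
    exact h.symm
  have g1 : a = b * star b * a := by
    have k := hS.Kq (hS.rr_idem b) (hS.e5 b) (star a)
    rw [f1, hS.e1 a] at k
    exact k
  have f2 : star b * (a * star a) = star b := by
    have h := hr (star b) Tsb
    rw [show star b * (b * star b) = star b from by
          simpa only [mul_assoc] using hS.sxs b] at h
    exact h
  have g2 : b = a * star a * b := by
    have k := hS.Kq (hS.rr_idem a) (hS.e5 a) (star b)
    rw [f2, hS.e1 b] at k
    exact k
  have g3 : a = a * (star b * b) := by
    have h := hl a Ta
    rw [show a * (star a * a) = a from by rw [← mul_assoc, hS.e4 a]] at h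
    exact h
  have g4 : b = b * (star a * a) := by
    have h := hl b hTb
    rw [show b * (star b * b) = b from by rw [← mul_assoc, hS.e4 b]] at h
    exact h.symm
  have hFE : b * star b * (a * star a) = a * star a := by
    calc b * star b * (a * star a) = b * star b * a * star a := (mul_assoc _ a (star a)).symm
      _ = a * star a := by rw [← g1]
  have hEF : a * star a * (b * star b) = b * star b := by
    calc a * star a * (b * star b) = a * star a * b * star b := (mul_assoc _ b (star b)).symm
      _ = b * star b := by rw [← g2]
  have hEeqF : a * star a = b * star b :=
    hS.eqproj (hS.rr_idem a) (hS.e5 a) (hS.e5 b) hEF hFE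
  have hGH : star a * a * (star b * b) = star a * a := by
    calc star a * a * (star b * b) = star a * (a * (star b * b)) := by simp only [mul_assoc]
      _ = star a * a := by rw [← g3]
  have hHG : star b * b * (star a * a) = star b * b := by
    calc star b * b * (star a * a) = star b * (b * (star a * a)) := by simp only [mul_assoc]
      _ = star b * b := by rw [← g4]
  have hGeqH : star a * a = star b * b :=
    hS.eqproj2 (hS.ll_idem b) (hS.lstar b) (hS.lstar a) hGH hHG
  exact hS.Qlemma hEeqF hGeqH



section Ideal

variable (d : S)

/-- `x` lies above `d` (in the `J`-order). -/
def Ud (x : S) : Prop := ∃ u v : S, d = u * x * v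

/-- `w` lies in the ideal generated by `d`. -/
def Td (w : S) : Prop := ∃ s t : S, w = s * d * t

end Ideal

lemma Ud_self (d : S) : Ud d d := ⟨d * star d, star d * d, hS.self_sandwich d⟩

lemma Ud_star {d x : S} (h : Ud d x) : Ud d (star x) := by
  obtain ⟨u, v, hd⟩ := h
  refine ⟨u * x, x * v, ?_⟩
  rw [hd]
  simp only [mul_assoc]
  rw [hS.e4c x v]

lemma Ud_mul_left {d x y : S} (h : Ud d (x * y)) : Ud d x := by
  obtain ⟨u, v, hd⟩ := h
  exact ⟨u, y * v, by rw [hd]; simp only [mul_assoc]⟩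

lemma Ud_mul_right {d x y : S} (h : Ud d (x * y)) : Ud d y := by
  obtain ⟨u, v, hd⟩ := h
  exact ⟨u * x, v, by rw [hd]; simp only [mul_assoc]⟩

lemma Ud_rr {d x : S} (h : Ud d x) : Ud d (x * star x) := by
  obtain ⟨u, v, hd⟩ := h
  refine ⟨u, x * v, ?_⟩
  rw [hd]
  simp only [mul_assoc]
  rw [hS.e4c x v]

lemma Ud_ll {d x : S} (h : Ud d x) : Ud d (star x * x) := by
  obtain ⟨u, v, hd⟩ := h
  refine ⟨u * x, v, ?_⟩
  rw [hd]
  simp only [mul_assoc]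
  rw [hS.e4c x v]

/-- `xy` is above `d` iff the product of inner projections `(x'x)(yy')` is. -/
lemma Ud_prod {d x y : S} :
    Ud d (star x * x * (y * star y)) ↔ Ud d (x * y) := by
  constructor
  · rintro ⟨u, v, hd⟩
    refine ⟨u * star x, star y * v, ?_⟩
    rw [hd]; simp only [mul_assoc]
  · rintro ⟨u, v, hd⟩
    refine ⟨u * x, y * v, ?_⟩
    rw [hd]
    simp only [mul_assoc]
    rw [hS.e4c y v, hS.e4c x (y * v)]

/-- Edge well-definedness: replacing projections by test-equivalent ones
preserves being above `d`. -/
lemma relWD {d p q p' q' : S} (hpp : p * p = p) (hqq : q * q = q)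
    (hp : ∀ w : S, Td d w → w * p = w * p') (hq : ∀ w : S, Td d w → w * q = w * q')
    (hU : Ud d (p * q)) : Ud d (p' * q') := by
  obtain ⟨u, v, hd⟩ := hU
  have Tw1 : Td d (d * star d * (u * p)) := by
    refine ⟨d * star d, star d * (u * p), ?_⟩
    simp only [mul_assoc]
    rw [hS.sxsc d (u * p)]
  have Tw2 : Td d (d * star d * (u * p) * p) := by
    refine ⟨d * star d, star d * (u * p * p), ?_⟩
    simp only [mul_assoc]
    rw [hS.sxsc d (u * (p * p))]
  have step1 : d * star d * (u * p) * p' = d * star d * (u * p) * p := (hp _ Tw1).symm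
  have step2 : d * star d * (u * p) * p * q' = d * star d * (u * p) * p * q :=
    (hq _ Tw2).symm
  have ppc : ∀ t : S, p * (p * t) = p * t := fun t => by
    simpa only [mul_assoc] using congrArg (fun c => c * t) hpp
  have qqc : ∀ t : S, q * (q * t) = q * t := fun t => by
    simpa only [mul_assoc] using congrArg (fun c => c * t) hqq
  have hd' : u * (p * (q * v)) = d := by simpa only [mul_assoc] using hd.symm
  refine ⟨d * star d * (u * p), q * v, ?_⟩
  have X : d * star d * (u * p) * (p' * q') * (q * v) = d := by
    calc d * star d * (u * p) * (p' * q') * (q * v)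
        = d * star d * (u * p) * p' * (q' * (q * v)) := by simp only [mul_assoc]
      _ = d * star d * (u * p) * p * (q' * (q * v)) := by rw [step1]
      _ = d * star d * (u * p) * p * q' * (q * v) := by simp only [mul_assoc]
      _ = d * star d * (u * p) * p * q * (q * v) := by rw [step2]
      _ = d := by
          simp only [mul_assoc, ppc, qqc]
          rw [hd']
          rw [show d * (star d * d) = d from by rw [← mul_assoc, hS.e4 d]]
  exact X.symm

/-- The element realizing an arbitrary pair of projection-vertices. -/
lemma ztrick {d p q u₁ v₁ u₂ v₂ : S} (hdp : d = u₁ * p * v₁) (hdq : d = u₂ * q * v₂) :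
    d = u₁ * (p * (v₁ * (star d * (u₂ * q)))) * v₂ := by
  have hdq' : u₂ * (q * v₂) = d := by simpa only [mul_assoc] using hdq.symm
  have hdp' : ∀ t : S, u₁ * (p * (v₁ * t)) = d * t := fun t => by
    simpa only [mul_assoc] using congrArg (fun c => c * t) hdp.symm
  have X : u₁ * (p * (v₁ * (star d * (u₂ * q)))) * v₂ = d := by
    calc u₁ * (p * (v₁ * (star d * (u₂ * q)))) * v₂
        = u₁ * (p * (v₁ * (star d * (u₂ * (q * v₂))))) := by simp only [mul_assoc]
      _ = u₁ * (p * (v₁ * (star d * d))) := by rw [hdq']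
      _ = d * (star d * d) := hdp' _
      _ = d := by rw [← mul_assoc, hS.e4 d]
  exact X.symm

end SigRef

namespace SigRef

section Construction

variable {S : Type u} [Semigroup S] [Star S]

/-- Vertices: projections lying above `d`. -/
def VtxT (d : S) : Type u := {p : S // (p * p = p ∧ star p = p) ∧ SigRef.Ud d p}

/-- Test equivalence of vertices. -/
def vsd (d : S) : Setoid (VtxT d) :=
  ⟨fun p q => ∀ w : S, SigRef.Td d w → w * p.1 = w * q.1,
    fun _ _ _ => rfl,
    fun h w hw => (h w hw).symm,
    fun h1 h2 w hw => (h1 w hw).trans (h2 w hw)⟩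

/-- The vertex set of the quotient graph. -/
def VQ (d : S) : Type u := Quotient (vsd d)

/-- The edge relation of the quotient graph. -/
def relAdj (hS : SigRef S) (d : S) : VQ d → VQ d → Prop :=
  Quotient.lift₂ (fun p q => SigRef.Ud d (p.1 * q.1))
    (fun p q p' q' hp hq =>
      propext ⟨fun h => hS.relWD p.2.1.1 q.2.1.1 hp hq h,
        fun h => hS.relWD p'.2.1.1 q'.2.1.1
          (fun w hw => (hp w hw).symm) (fun w hw => (hq w hw).symm) h⟩)

lemma relAdj_mk (hS : SigRef S) (d : S) (p q : VtxT d) :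
    relAdj hS d (Quotient.mk (vsd d) p) (Quotient.mk (vsd d) q) ↔ SigRef.Ud d (p.1 * q.1) :=
  Iff.rfl

lemma relAdj_refl (hS : SigRef S) (d : S) : ∀ v : VQ d, relAdj hS d v v := by
  intro v
  induction v using Quotient.ind with
  | _ p =>
    rw [relAdj_mk, p.2.1.1]
    exact p.2.2

/-- The candidate homomorphism onto the adjacency semigroup. -/
noncomputable def phiAdj (hS : SigRef S) (d : S) : S → Option (VQ d × VQ d) := fun x =>
  @dite _ (SigRef.Ud d x) (Classical.propDecidable _) (fun h =>
    some (Quotient.mk (vsd d) ⟨x * star x, ⟨hS.rr_idem x, hS.e5 x⟩, hS.Ud_rr h⟩,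
          Quotient.mk (vsd d) ⟨star x * x, ⟨hS.ll_idem x, hS.lstar x⟩, hS.Ud_ll h⟩))
    (fun _ => none)

lemma phiAdj_pos (hS : SigRef S) (d : S) {x : S} (h : SigRef.Ud d x) :
    phiAdj hS d x =
      some (Quotient.mk (vsd d) ⟨x * star x, ⟨hS.rr_idem x, hS.e5 x⟩, hS.Ud_rr h⟩,
            Quotient.mk (vsd d) ⟨star x * x, ⟨hS.ll_idem x, hS.lstar x⟩, hS.Ud_ll h⟩) := by
  unfold phiAdj
  exact dif_pos h

lemma phiAdj_neg (hS : SigRef S) (d : S) {x : S} (h : ¬ SigRef.Ud d x) :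
    phiAdj hS d x = none := by
  unfold phiAdj
  exact dif_neg h

lemma adjMul_some_some {V : Type u} (r : V → V → Prop) (a b c e : V) :
    adjMul r (some (a, b)) (some (c, e)) =
      @ite _ (r b c) (Classical.propDecidable _) (some (a, e)) none := rfl

lemma adjMul_none_left {V : Type u} (r : V → V → Prop) (z : Option (V × V)) :
    adjMul r none z = none := by
  rcases z with _ | ⟨c, e⟩ <;> rfl

lemma adjMul_none_right {V : Type u} (r : V → V → Prop) (z : Option (V × V)) :
    adjMul r z none = none := by
  rcases z with _ | ⟨c, e⟩ <;> rfl

end Construction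

end SigRef

namespace SigRef

section Main

variable {S : Type u} [Semigroup S] [Star S]

lemma adjStar_some {V : Type u} (a b : V) : adjStar (some (a, b)) = some (b, a) := rfl

lemma phiAdj_mul (hS : SigRef S) (d : S) (x y : S) :
    phiAdj hS d (x * y) = adjMul (relAdj hS d) (phiAdj hS d x) (phiAdj hS d y) := by
  by_cases hx : SigRef.Ud d x
  · by_cases hy : SigRef.Ud d y
    · erw [phiAdj_pos hS d hx, phiAdj_pos hS d hy, adjMul_some_some]
      by_cases hxy : SigRef.Ud d (x * y)
      · have hrel : SigRef.Ud d (star x * x * (y * star y)) := (hS.Ud_prod).mpr hxy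
        erw [if_pos ((relAdj_mk hS d ⟨star x * x, ⟨hS.ll_idem x, hS.lstar x⟩, hS.Ud_ll hx⟩
          ⟨y * star y, ⟨hS.rr_idem y, hS.e5 y⟩, hS.Ud_rr hy⟩).mpr hrel), phiAdj_pos hS d hxy]
        refine congrArg some (Prod.ext ?_ ?_)
        · exact Quotient.sound (hS.reqr hxy)
        · exact Quotient.sound (hS.reql hxy)
      · have hnrel : ¬ relAdj hS d
            (Quotient.mk (vsd d) ⟨star x * x, ⟨hS.ll_idem x, hS.lstar x⟩, hS.Ud_ll hx⟩)
            (Quotient.mk (vsd d) ⟨y * star y, ⟨hS.rr_idem y, hS.e5 y⟩, hS.Ud_rr hy⟩) :=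
          fun h => hxy ((hS.Ud_prod).mp ((relAdj_mk hS d _ _).mp h))
        rw [if_neg hnrel, phiAdj_neg hS d hxy]
    · have hxy : ¬ SigRef.Ud d (x * y) := fun h => hy (hS.Ud_mul_right h)
      rw [phiAdj_neg hS d hy, adjMul_none_right, phiAdj_neg hS d hxy]
  · have hxy : ¬ SigRef.Ud d (x * y) := fun h => hx (hS.Ud_mul_left h)
    rw [phiAdj_neg hS d hx, adjMul_none_left, phiAdj_neg hS d hxy]

lemma phiAdj_star (hS : SigRef S) (d : S) (x : S) :
    phiAdj hS d (star x) = adjStar (phiAdj hS d x) := by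
  by_cases hx : SigRef.Ud d x
  · have hsx : SigRef.Ud d (star x) := hS.Ud_star hx
    erw [phiAdj_pos hS d hsx, phiAdj_pos hS d hx, adjStar_some]
    refine congrArg some (Prod.ext ?_ ?_)
    · refine congrArg (Quotient.mk (vsd d)) (Subtype.ext ?_)
      show star x * star (star x) = star x * x
      rw [hS.e1 x]
    · refine congrArg (Quotient.mk (vsd d)) (Subtype.ext ?_)
      show star (star x) * star x = x * star x
      rw [hS.e1 x]
  · have hsx : ¬ SigRef.Ud d (star x) := fun h => hx (by
      have h2 := hS.Ud_star h
      rwa [hS.e1 x] at h2)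
    rw [phiAdj_neg hS d hsx, phiAdj_neg hS d hx]
    rfl

lemma phiAdj_surj (hS : SigRef S) (d s₀ : S) (hs₀ : ¬ SigRef.Ud d s₀) :
    Function.Surjective (phiAdj hS d) := by
  rintro (_ | ⟨v, w⟩)
  · exact ⟨s₀, phiAdj_neg hS d hs₀⟩
  · obtain ⟨p, hp⟩ := Quotient.exists_rep v
    obtain ⟨q, hq⟩ := Quotient.exists_rep w
    obtain ⟨⟨hpp, hps⟩, hpU⟩ := p.2
    obtain ⟨⟨hqq, hqs⟩, hqU⟩ := q.2
    obtain ⟨u₁, v₁, hdp⟩ := hpU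
    obtain ⟨u₂, v₂, hdq⟩ := hqU
    have hz : d = u₁ * (p.1 * (v₁ * (star d * (u₂ * q.1)))) * v₂ := hS.ztrick hdp hdq
    have hUz : SigRef.Ud d (p.1 * (v₁ * (star d * (u₂ * q.1)))) := ⟨u₁, v₂, hz⟩
    refine ⟨p.1 * (v₁ * (star d * (u₂ * q.1))), ?_⟩
    rw [phiAdj_pos hS d hUz, ← hp, ← hq]
    refine congrArg some (Prod.ext ?_ ?_)
    · apply Quotient.sound
      intro w' hw'
      show w' * (p.1 * (v₁ * (star d * (u₂ * q.1))) *
          star (p.1 * (v₁ * (star d * (u₂ * q.1))))) = w' * p.1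
      rw [hS.reqr (x := p.1) (y := v₁ * (star d * (u₂ * q.1))) hUz w' hw', hps]
      exact congrArg (fun t => w' * t) hpp
    · apply Quotient.sound
      intro w' hw'
      show w' * (star (p.1 * (v₁ * (star d * (u₂ * q.1)))) *
          (p.1 * (v₁ * (star d * (u₂ * q.1))))) = w' * q.1
      have hzz : p.1 * (v₁ * (star d * (u₂ * q.1))) = p.1 * (v₁ * (star d * u₂)) * q.1 := by
        simp only [mul_assoc]
      have hUz' : SigRef.Ud d (p.1 * (v₁ * (star d * u₂)) * q.1) := hzz ▸ hUz
      rw [hzz, hS.reql (x := p.1 * (v₁ * (star d * u₂))) (y := q.1) hUz' w' hw', hqs]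
      exact congrArg (fun t => w' * t) hqq

lemma phiAdj_inj (hS : SigRef S) (d : S) {x y : S} (hx : SigRef.Ud d x) (hy : SigRef.Ud d y)
    (he : phiAdj hS d x = phiAdj hS d y) :
    (∀ w : S, SigRef.Td d w → w * (x * star x) = w * (y * star y)) ∧
    (∀ w : S, SigRef.Td d w → w * (star x * x) = w * (star y * y)) := by
  rw [phiAdj_pos hS d hx, phiAdj_pos hS d hy] at he
  have he' := Option.some.inj he
  exact ⟨Quotient.exact (congrArg Prod.fst he'), Quotient.exact (congrArg Prod.snd he')⟩

end Main

end SigRef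

namespace SigRef

section Square

variable {S : Type u} [Semigroup S] [Star S]

/-- The candidate homomorphism onto the square band, when everything lies above `d`. -/
def phiSq (hS : SigRef S) (d : S) (hfull : ∀ s : S, SigRef.Ud d s) : S → VQ d × VQ d :=
  fun x =>
    (Quotient.mk (vsd d) ⟨x * star x, ⟨hS.rr_idem x, hS.e5 x⟩, hfull _⟩,
     Quotient.mk (vsd d) ⟨star x * x, ⟨hS.ll_idem x, hS.lstar x⟩, hfull _⟩)

lemma phiSq_mul (hS : SigRef S) (d : S) (hfull : ∀ s : S, SigRef.Ud d s) (x y : S) :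
    phiSq hS d hfull (x * y) = ((phiSq hS d hfull x).1, (phiSq hS d hfull y).2) :=
  Prod.ext (Quotient.sound (hS.reqr (hfull (x * y))))
    (Quotient.sound (hS.reql (hfull (x * y))))

lemma phiSq_star (hS : SigRef S) (d : S) (hfull : ∀ s : S, SigRef.Ud d s) (x : S) :
    phiSq hS d hfull (star x) = ((phiSq hS d hfull x).2, (phiSq hS d hfull x).1) :=
  Prod.ext
    (congrArg (Quotient.mk (vsd d)) (Subtype.ext
      (show star x * star (star x) = star x * x by rw [hS.e1 x])))
    (congrArg (Quotient.mk (vsd d)) (Subtype.ext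
      (show star (star x) * star x = x * star x by rw [hS.e1 x])))

lemma phiSq_surj (hS : SigRef S) (d : S) (hfull : ∀ s : S, SigRef.Ud d s) :
    Function.Surjective (phiSq hS d hfull) := by
  rintro ⟨v, w⟩
  obtain ⟨p, hp⟩ := Quotient.exists_rep v
  obtain ⟨q, hq⟩ := Quotient.exists_rep w
  obtain ⟨⟨hpp, hps⟩, hpU⟩ := p.2
  obtain ⟨⟨hqq, hqs⟩, hqU⟩ := q.2
  obtain ⟨u₁, v₁, hdp⟩ := hpU
  obtain ⟨u₂, v₂, hdq⟩ := hqU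
  have hz : d = u₁ * (p.1 * (v₁ * (star d * (u₂ * q.1)))) * v₂ := hS.ztrick hdp hdq
  have hUz : SigRef.Ud d (p.1 * (v₁ * (star d * (u₂ * q.1)))) := ⟨u₁, v₂, hz⟩
  refine ⟨p.1 * (v₁ * (star d * (u₂ * q.1))), ?_⟩
  rw [← hp, ← hq]
  refine Prod.ext ?_ ?_
  · apply Quotient.sound
    intro w' hw'
    show w' * (p.1 * (v₁ * (star d * (u₂ * q.1))) *
        star (p.1 * (v₁ * (star d * (u₂ * q.1))))) = w' * p.1
    rw [hS.reqr (x := p.1) (y := v₁ * (star d * (u₂ * q.1))) hUz w' hw', hps]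
    exact congrArg (fun t => w' * t) hpp
  · apply Quotient.sound
    intro w' hw'
    show w' * (star (p.1 * (v₁ * (star d * (u₂ * q.1)))) *
        (p.1 * (v₁ * (star d * (u₂ * q.1))))) = w' * q.1
    have hzz : p.1 * (v₁ * (star d * (u₂ * q.1))) = p.1 * (v₁ * (star d * u₂)) * q.1 := by
      simp only [mul_assoc]
    have hUz' : SigRef.Ud d (p.1 * (v₁ * (star d * u₂)) * q.1) := hzz ▸ hUz
    rw [hzz, hS.reql (x := p.1 * (v₁ * (star d * u₂))) (y := q.1) hUz' w' hw', hqs]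
    exact congrArg (fun t => w' * t) hqq

lemma phiSq_inj (hS : SigRef S) (d : S) (hfull : ∀ s : S, SigRef.Ud d s) {x y : S}
    (he : phiSq hS d hfull x = phiSq hS d hfull y) :
    (∀ w : S, SigRef.Td d w → w * (x * star x) = w * (y * star y)) ∧
    (∀ w : S, SigRef.Td d w → w * (star x * x) = w * (star y * y)) :=
  ⟨Quotient.exact (congrArg Prod.fst he), Quotient.exact (congrArg Prod.snd he)⟩

end Square

end SigRef

/-- Lemma: every unary semigroup satisfying `Σ_ref` is a subdirect product of
adjacency semigroups of reflexive graphs and square bands: any two distinct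
elements are separated by a surjective unary semigroup homomorphism onto a
square band or onto the adjacency semigroup of some reflexive graph. -/
theorem Sigma_ref_subdirect {S : Type u} [Semigroup S] [Star S]
    (h1 : ∀ x : S, star (star x) = x)
    (h2 : ∀ x y z : S, x * star (y * z) = star (y * star (x * star z)))
    (h3 : ∀ x y z : S, star (x * y) * z = star (star (star x * z) * y))
    (h4 : ∀ x : S, x * star x * x = x)
    (h5 : ∀ x : S, star (x * star x) = x * star x)
    (h6 : ∀ x : S, x * x * x = x * x)
    (h7 : ∀ x y z : S, x * y * x * z * x = x * z * x * y * x * z * x)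
    (h8 : ∀ x y z : S, x * z * x * y * x * z * x = x * z * x * y * x)
    (h9 : ∀ x y z : S, star x * y * x * z * x = star (x * z * x) * y * x * z * x)
    (h10 : ∀ x y z : S, x * y * x * z * star x = x * y * x * z * star (x * y * x)) :
    ∀ a b : S, a ≠ b →
      (∃ (V : Type u), Nonempty V ∧
          ∃ φ : S → V × V, Function.Surjective φ ∧
            (∀ x y : S, φ (x * y) = ((φ x).1, (φ y).2)) ∧
            (∀ x : S, φ (star x) = ((φ x).2, (φ x).1)) ∧
            φ a ≠ φ b) ∨
      (∃ (V : Type u) (rel : V → V → Prop), (∀ v : V, rel v v) ∧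
          ∃ φ : S → Option (V × V), Function.Surjective φ ∧
            (∀ x y : S, φ (x * y) = adjMul rel (φ x) (φ y)) ∧
            (∀ x : S, φ (star x) = adjStar (φ x)) ∧
            φ a ≠ φ b) := by
  have hS : SigRef S := ⟨h1, h2, h3, h4, h7, h8, h5⟩
  intro a b hab
  by_cases H1 : ∃ u v : S, a = u * b * v
  · by_cases H2 : ∃ u v : S, b = u * a * v
    · by_cases H3 : ∀ s : S, ∃ u v : S, a = u * s * v
      · left
        refine ⟨SigRef.VQ a, ⟨(SigRef.phiSq hS a H3 a).1⟩, SigRef.phiSq hS a H3,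
          SigRef.phiSq_surj hS a H3, SigRef.phiSq_mul hS a H3, SigRef.phiSq_star hS a H3, ?_⟩
        intro hEq
        have hinj := SigRef.phiSq_inj hS a H3 hEq
        exact hab (hS.sep H2 hinj.1 hinj.2)
      · right
        obtain ⟨s₀, hs₀⟩ := not_forall.mp H3
        refine ⟨SigRef.VQ a, SigRef.relAdj hS a, SigRef.relAdj_refl hS a, SigRef.phiAdj hS a,
          SigRef.phiAdj_surj hS a s₀ hs₀, SigRef.phiAdj_mul hS a, SigRef.phiAdj_star hS a, ?_⟩
        intro hEq
        have hinj := SigRef.phiAdj_inj hS a (hS.Ud_self a) H1 hEq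
        exact hab (hS.sep H2 hinj.1 hinj.2)
    · right
      refine ⟨SigRef.VQ b, SigRef.relAdj hS b, SigRef.relAdj_refl hS b, SigRef.phiAdj hS b,
        SigRef.phiAdj_surj hS b a H2, SigRef.phiAdj_mul hS b, SigRef.phiAdj_star hS b, ?_⟩
      intro hEq
      rw [SigRef.phiAdj_neg hS b H2, SigRef.phiAdj_pos hS b (hS.Ud_self b)] at hEq
      cases hEq
  · right
    refine ⟨SigRef.VQ a, SigRef.relAdj hS a, SigRef.relAdj_refl hS a, SigRef.phiAdj hS a,
      SigRef.phiAdj_surj hS a b H1, SigRef.phiAdj_mul hS a, SigRef.phiAdj_star hS a, ?_⟩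
    intro hEq
    rw [SigRef.phiAdj_pos hS a (hS.Ud_self a), SigRef.phiAdj_neg hS a H1] at hEq
    cases hEq
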